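/- A graph G contains a subdivision of the k-fan F_k whose universal (center) vertex is a given vertex v if and only if G−v contains an N(v)-rooted path minor on k vertices. -/

import Mathlib

open SimpleGraph

/-- `x` is a (reflexive) ancestor of `y` in the tree `T` rooted at `r`,
expressed metrically: `x` lies on the unique `r`–`y` path. -/
def AncIn {V : Type*} (T : SimpleGraph V) (r x y : V) : Prop :=
  T.dist r x + T.dist x y = T.dist r y

/-- A tree-layout of `G`: a rooted tree on the vertex set of `G` such that the endpoints
of every edge of `G` are in ancestor-descendant relation. -/
structure TreeLayout {V : Type*} (G : SimpleGraph V) where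
  tree : SimpleGraph V
  isTree : tree.IsTree
  root : V
  layout : ∀ ⦃x y : V⦄, G.Adj x y → AncIn tree root x y ∨ AncIn tree root y x

namespace TreeLayout

variable {V : Type*} {G : SimpleGraph V}

/-- `x` is an ancestor of `y` (reflexively) in the tree-layout. -/
def Anc (L : TreeLayout G) (x y : V) : Prop := AncIn L.tree L.root x y

def StrictAnc (L : TreeLayout G) (x y : V) : Prop := L.Anc x y ∧ x ≠ y

/-- The bandwidth of the tree-layout is at most `k`: neighbours in `G` are at
tree-distance at most `k`. -/
def BandwidthLE (L : TreeLayout G) (k : ℕ) : Prop :=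
  ∀ ⦃x y : V⦄, G.Adj x y → L.tree.dist x y ≤ k

/-- The interval `[a,b]` of the tree-layout: vertices on the tree path from `a` to `b`
(for `a` an ancestor of `b`). -/
def interval (L : TreeLayout G) (a b : V) : Set V := {z : V | L.Anc a z ∧ L.Anc z b}

end TreeLayout

/-- Treebandwidth: the minimum bandwidth over tree-layouts of `G`. -/
noncomputable def treebandwidth {V : Type*} (G : SimpleGraph V) : ℕ :=
  sInf {k | ∃ L : TreeLayout G, L.BandwidthLE k}

/-- Treedepth: the minimum depth (number of vertices on a root-to-leaf path) of a
tree-layout (elimination tree) of `G`. -/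
noncomputable def treedepth {V : Type*} (G : SimpleGraph V) : ℕ :=
  sInf {k | ∃ L : TreeLayout G, ∀ v : V, L.tree.dist L.root v + 1 ≤ k}

/-- A tree-partition of `G`: a partition of `V(G)` indexed by the nodes of a tree such that
every edge of `G` has both ends in one part or in parts indexed by adjacent nodes. -/
structure TreePartition {V : Type*} (G : SimpleGraph V) where
  ι : Type
  tree : SimpleGraph ι
  isTree : tree.IsTree
  part : V → ι
  adj : ∀ ⦃x y : V⦄, G.Adj x y → part x = part y ∨ tree.Adj (part x) (part y)

/-- Tree-partition-width: minimum over tree-partitions of the maximum part size. -/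
noncomputable def treePartitionWidth {V : Type*} (G : SimpleGraph V) : ℕ :=
  sInf {k | ∃ P : TreePartition G, ∀ i : P.ι, {v : V | P.part v = i}.ncard ≤ k}

/-- The connected component of `v` in the subgraph of `G` induced by `S`. -/
def connCompIn {V : Type*} (G : SimpleGraph V) (S : Set V) (v : V) : Set V :=
  {w : V | ∃ (hv : v ∈ S) (hw : w ∈ S), (G.induce S).Reachable ⟨v, hv⟩ ⟨w, hw⟩}

/-- `RootedTreedepthLE G U S n` expresses `td(G[S], U) ≤ n` for the rooted treedepth:
it is `0` when `S` misses `U`, and otherwise one may delete one vertex from each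
connected component and recurse. -/
inductive RootedTreedepthLE {V : Type*} (G : SimpleGraph V) (U : Set V) : Set V → ℕ → Prop
  | base (S : Set V) (n : ℕ) (h : S ∩ U = ∅) : RootedTreedepthLE G U S n
  | step (S : Set V) (n : ℕ) (pick : ∀ v : V, v ∈ S → V)
      (hpick : ∀ (v : V) (hv : v ∈ S), pick v hv ∈ connCompIn G S v)
      (h : ∀ (v : V) (hv : v ∈ S),
        RootedTreedepthLE G U (connCompIn G S v \ {pick v hv}) n) :
      RootedTreedepthLE G U S (n + 1)

/-- A `U`-rooted minor model of the path on `k` vertices in `G`. -/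
structure RootedPathMinor {V : Type*} (G : SimpleGraph V) (U : Set V) (k : ℕ) where
  branch : Fin k → Set V
  connected : ∀ i, (G.induce (branch i)).Connected
  disjoint : ∀ i j, i ≠ j → Disjoint (branch i) (branch j)
  rooted : ∀ i, (branch i ∩ U).Nonempty
  adj : ∀ i j : Fin k, (j : ℕ) = (i : ℕ) + 1 → ∃ a ∈ branch i, ∃ b ∈ branch j, G.Adj a b

/-- A subdivision of the `k`-fan in `G` with universal (center) vertex `v`:
branch vertices `b 0, …, b (k-1)` of the path, internally disjoint spokes from `v`
and internally disjoint path segments between consecutive branch vertices. -/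
structure FanSubdivision {V : Type*} (G : SimpleGraph V) (v : V) (k : ℕ) where
  b : Fin k → V
  binj : Function.Injective b
  bne : ∀ i, b i ≠ v
  spoke : ∀ i : Fin k, G.Walk v (b i)
  spokePath : ∀ i, (spoke i).IsPath
  seg : ∀ (i : Fin k) (h : (i : ℕ) + 1 < k), G.Walk (b i) (b ⟨(i : ℕ) + 1, h⟩)
  segPath : ∀ i h, (seg i h).IsPath
  vNotinSeg : ∀ i h, v ∉ (seg i h).support
  spokeDisj : ∀ i j, i ≠ j →
    {x | x ∈ (spoke i).support} ∩ {x | x ∈ (spoke j).support} = {v}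
  spokeSegDisj : ∀ i j h,
    {x | x ∈ (spoke i).support} ∩ {x | x ∈ (seg j h).support} ⊆
      ({b i} : Set V) ∩ {b j, b ⟨(j : ℕ) + 1, h⟩}
  segDisj : ∀ i j hi hj, i ≠ j →
    {x | x ∈ (seg i hi).support} ∩ {x | x ∈ (seg j hj).support} ⊆
      ({b i, b ⟨(i : ℕ) + 1, hi⟩} : Set V) ∩ {b j, b ⟨(j : ℕ) + 1, hj⟩}

/-- A `p`-centered colouring: every (nonempty) connected induced subgraph either receives
more than `p` colours or has a uniquely coloured vertex. -/
def IsPCenteredColoring {V : Type*} (G : SimpleGraph V) (p : ℕ) (c : V → ℕ) : Prop :=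
  ∀ S : Set V, S.Nonempty → (G.induce S).Connected →
    p < (c '' S).ncard ∨ ∃ x ∈ S, ∀ y ∈ S, c y = c x → y = x

/-- Treewidth, characterised via tree-layouts: the minimum over tree-layouts of the maximum
over nodes `u` of the number of strict ancestors of `u` that are `G`-neighbours of some
descendant of `u` (including `u`). -/
noncomputable def treewidthTL {V : Type*} (G : SimpleGraph V) : ℕ :=
  sInf {k | ∃ L : TreeLayout G, ∀ u : V,
    {a : V | L.StrictAnc a u ∧ ∃ d : V, L.Anc u d ∧ G.Adj a d}.ncard ≤ k}

/-- The pruned subtree of `x` in a tree-layout: descendants of `x` (including `x`) having a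
neighbour of `x` among their own descendants. -/
def prunedSubtree {V : Type*} {G : SimpleGraph V} (L : TreeLayout G) (x : V) : Set V :=
  {y : V | L.Anc x y ∧ ∃ d : V, L.Anc y d ∧ G.Adj x d}

/-- Treespan: the minimum over tree-layouts of (maximum size of a pruned subtree minus one). -/
noncomputable def treespan {V : Type*} (G : SimpleGraph V) : ℕ :=
  sInf {k | ∃ L : TreeLayout G, ∀ x : V, (prunedSubtree L x).ncard ≤ k + 1}

/-- A tree decomposition of `G`. -/
structure TreeDecomp {V : Type*} (G : SimpleGraph V) where
  ι : Type
  tree : SimpleGraph ι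
  isTree : tree.IsTree
  bag : ι → Set V
  coverV : ∀ v : V, ∃ t, v ∈ bag t
  coverE : ∀ ⦃x y : V⦄, G.Adj x y → ∃ t, x ∈ bag t ∧ y ∈ bag t
  subtree : ∀ v : V, (tree.induce {t : ι | v ∈ bag t}).Connected

/-- Domino treewidth: minimum width over tree decompositions in which every vertex
belongs to at most two bags. -/
noncomputable def dominoTreewidth {V : Type*} (G : SimpleGraph V) : ℕ :=
  sInf {k | ∃ D : TreeDecomp G, (∀ v : V, {t : D.ι | v ∈ D.bag t}.ncard ≤ 2) ∧
    ∀ t : D.ι, (D.bag t).ncard ≤ k + 1}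

/-- Edge-treewidth via tree-layouts: the minimum over tree-layouts of the maximum over nodes
`u` of the number of edges with one endpoint a descendant of `u` (including `u`) and the other
a strict ancestor of `u`. -/
noncomputable def edgeTreewidth {V : Type*} (G : SimpleGraph V) : ℕ :=
  sInf {k | ∃ L : TreeLayout G, ∀ u : V,
    {p : V × V | L.StrictAnc p.1 u ∧ L.Anc u p.2 ∧ G.Adj p.1 p.2}.ncard ≤ k}

/-- `S` is a block (2-connected component) of `G`: a maximal connected set of vertices whose
induced subgraph has no cutvertex. -/
def IsBlock {V : Type*} (G : SimpleGraph V) (S : Set V) : Prop :=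
  S.Nonempty ∧ (G.induce S).Connected ∧
    (∀ x ∈ S, (G.induce (S \ {x})).Preconnected) ∧
    ∀ S' : Set V, S ⊆ S' → (G.induce S').Connected →
      (∀ x ∈ S', (G.induce (S' \ {x})).Preconnected) → S' = S

/-- Biconnected maximum degree: the maximum over blocks of `G` of the maximum degree
inside the block. -/
noncomputable def biconnMaxDegree {V : Type*} (G : SimpleGraph V) : ℕ :=
  sSup {d | ∃ (S : Set V) (v : V), IsBlock G S ∧ v ∈ S ∧ d = {w ∈ S | G.Adj v w}.ncard}

/-- `G` is 3-connected: more than 3 vertices, and removing any two vertices leaves it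
connected. -/
def ThreeConnected {V : Type*} (G : SimpleGraph V) : Prop :=
  3 < Nat.card V ∧ ∀ x y : V, (G.induce {v : V | v ≠ x ∧ v ≠ y}).Connected

/-- `G` has `H` as a minor (branch-set model). -/
def HasMinor {V W : Type*} (G : SimpleGraph V) (H : SimpleGraph W) : Prop :=
  ∃ B : W → Set V, (∀ w, (G.induce (B w)).Connected) ∧
    (∀ w w', w ≠ w' → Disjoint (B w) (B w')) ∧
    ∀ ⦃w w'⦄, H.Adj w w' → ∃ a ∈ B w, ∃ b ∈ B w', G.Adj a b

/-- Planarity via Wagner's theorem: no `K₅` minor and no `K₃,₃` minor. -/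
def PlanarWagner {V : Type*} (G : SimpleGraph V) : Prop :=
  ¬ HasMinor G (completeGraph (Fin 5)) ∧
    ¬ HasMinor G (completeBipartiteGraph (Fin 3) (Fin 3))

/-- A subdivision of the `k`-wheel in `G` with hub `v`. -/
structure WheelSubdivision {V : Type*} (G : SimpleGraph V) (v : V) (k : ℕ) where
  b : Fin k → V
  binj : Function.Injective b
  bne : ∀ i, b i ≠ v
  spoke : ∀ i : Fin k, G.Walk v (b i)
  spokePath : ∀ i, (spoke i).IsPath
  seg : ∀ i : Fin k, G.Walk (b i) (b (finRotate k i))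
  segPath : ∀ i, (seg i).IsPath
  vNotinSeg : ∀ i, v ∉ (seg i).support
  spokeDisj : ∀ i j, i ≠ j →
    {x | x ∈ (spoke i).support} ∩ {x | x ∈ (spoke j).support} = {v}
  spokeSegDisj : ∀ i j,
    {x | x ∈ (spoke i).support} ∩ {x | x ∈ (seg j).support} ⊆
      ({b i} : Set V) ∩ {b j, b (finRotate k j)}
  segDisj : ∀ i j, i ≠ j →
    {x | x ∈ (seg i).support} ∩ {x | x ∈ (seg j).support} ⊆
      ({b i, b (finRotate k i)} : Set V) ∩ {b j, b (finRotate k j)}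

/-- A subdivision of the `k`-dipole with poles `u`, `v`: `k` internally vertex-disjoint
`u`–`v` paths of length at least `2`. -/
structure DipoleSubdivision {V : Type*} (G : SimpleGraph V) (u v : V) (k : ℕ) where
  path : Fin k → G.Walk u v
  isPath : ∀ i, (path i).IsPath
  len : ∀ i, 2 ≤ (path i).length
  disj : ∀ i j, i ≠ j →
    {x | x ∈ (path i).support} ∩ {x | x ∈ (path j).support} = ({u, v} : Set V)

/-- A separation of `G`. -/
def IsSeparation {V : Type*} (G : SimpleGraph V) (A B : Set V) : Prop :=
  A ∪ B = Set.univ ∧ ∀ a ∈ A \ B, ∀ b ∈ B \ A, ¬ G.Adj a b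

/-- `μ(X,Y)`: the minimum order of a separation `(A,B)` with `X ⊆ A` and `Y ⊆ B`. -/
noncomputable def muSep {V : Type*} (G : SimpleGraph V) (X Y : Set V) : ℕ :=
  sInf {n | ∃ A B : Set V, IsSeparation G A B ∧ X ⊆ A ∧ Y ⊆ B ∧ (A ∩ B).ncard = n}

def IsMaximalClique {V : Type*} (G : SimpleGraph V) (K : Set V) : Prop :=
  G.IsClique K ∧ ∀ K' : Set V, G.IsClique K' → K ⊆ K' → K' = K

/-- `G` is proper chordal: it has a tree-layout in which every maximal clique is an
interval of a root-to-leaf path. -/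
def ProperChordal {V : Type*} (G : SimpleGraph V) : Prop :=
  ∃ L : TreeLayout G, ∀ K : Set V, IsMaximalClique G K →
    ∃ a b : V, L.Anc a b ∧ K = L.interval a b

/-- A topological-minor model (subdivision embedding) of `H` in `G`. -/
structure TopMinorEmbedding {W V : Type*} (H : SimpleGraph W) (G : SimpleGraph V) where
  φ : W → V
  inj : Function.Injective φ
  path : ∀ ⦃a b : W⦄, H.Adj a b → G.Walk (φ a) (φ b)
  isPath : ∀ ⦃a b : W⦄ (h : H.Adj a b), (path h).IsPath
  branchOnPath : ∀ ⦃a b : W⦄ (h : H.Adj a b) (w : W),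
    φ w ∈ (path h).support → w = a ∨ w = b
  disj : ∀ ⦃a b c d : W⦄ (hab : H.Adj a b) (hcd : H.Adj c d), s(a, b) ≠ s(c, d) →
    {x | x ∈ (path hab).support} ∩ {x | x ∈ (path hcd).support} ⊆
      ({φ a, φ b} : Set V) ∩ {φ c, φ d}

/-- A subdivision of the star `K_{1,s}` in `H` with all leaves in `X`. -/
structure StarSubdivision {V : Type*} (H : SimpleGraph V) (X : Set V) (s : ℕ) where
  center : V
  leaf : Fin s → V
  leafInj : Function.Injective leaf
  leafX : ∀ i, leaf i ∈ X
  leafNe : ∀ i, leaf i ≠ center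
  path : ∀ i : Fin s, H.Walk center (leaf i)
  isPath : ∀ i, (path i).IsPath
  disj : ∀ i j, i ≠ j →
    {x | x ∈ (path i).support} ∩ {x | x ∈ (path j).support} = {center}

/-- The weight `w(t,U)` of a set `U` at a node `t` of a tree decomposition is at most `a`:
`|β(t) ∩ U|` plus the number of a suitable family of adhesions incident to `t` whose union
hits all paths from `β(t)` to `U ∖ β(t)` is at most `a`. -/
def WeightLE {V : Type*} {G : SimpleGraph V} (D : TreeDecomp G) (U : Set V) (t : D.ι)
    (a : ℕ) : Prop :=
  ∃ F : Set D.ι, (∀ s ∈ F, D.tree.Adj t s) ∧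
    (D.bag t ∩ U).ncard + F.ncard ≤ a ∧
    ∀ ⦃x y : V⦄ (p : G.Walk x y), x ∈ D.bag t → y ∈ U \ D.bag t →
      ∃ z ∈ p.support, ∃ s ∈ F, z ∈ D.bag t ∩ D.bag s

/-- The graph obtained from `G` by subdividing the edge `xy` into a path with `n + 1`
new internal vertices. -/
def subdivideEdge {V : Type*} (G : SimpleGraph V) (x y : V) (n : ℕ) :
    SimpleGraph (V ⊕ Fin (n + 1)) :=
  SimpleGraph.fromRel (fun a b =>
    (∃ u w : V, a = Sum.inl u ∧ b = Sum.inl w ∧ G.Adj u w ∧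
      ¬(u = x ∧ w = y) ∧ ¬(u = y ∧ w = x)) ∨
    (a = Sum.inl x ∧ b = Sum.inr 0) ∨
    (∃ i : Fin n, a = Sum.inr i.castSucc ∧ b = Sum.inr i.succ) ∨
    (a = Sum.inr (Fin.last n) ∧ b = Sum.inl y))

section Aux
open Walk

variable {V : Type*} {H : SimpleGraph V}

lemma aux_reachable_induce {T : Set V} {a b : V} (w : H.Walk a b)
    (hsub : ∀ x ∈ w.support, x ∈ T) (ha : a ∈ T) (hb : b ∈ T) :
    (H.induce T).Reachable ⟨a, ha⟩ ⟨b, hb⟩ := by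
  induction w with
  | nil => rfl
  | @cons u x c h p ih =>
      have hx : x ∈ T := hsub x (by simp)
      have hadj : (H.induce T).Adj ⟨u, ha⟩ ⟨x, hx⟩ := h
      exact hadj.reachable.trans (ih (fun z hz => hsub z (by simp [hz])) hx hb)

lemma aux_connected_induce_support {a b : V} (w : H.Walk a b) :
    (H.induce {x | x ∈ w.support}).Connected := by
  classical
  rw [connected_iff]
  refine ⟨fun x y => ?_, ⟨⟨a, w.start_mem_support⟩⟩⟩
  obtain ⟨x, hx⟩ := x
  obtain ⟨y, hy⟩ := y
  have h1 := aux_reachable_induce (T := {x | x ∈ w.support}) (w.takeUntil x hx)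
    (fun z hz => support_takeUntil_subset _ _ hz) w.start_mem_support hx
  have h2 := aux_reachable_induce (T := {x | x ∈ w.support}) (w.takeUntil y hy)
    (fun z hz => support_takeUntil_subset _ _ hz) w.start_mem_support hy
  exact h1.symm.trans h2

lemma aux_exists_first_meet {s t : V} (R : H.Walk s t) :
    ∀ {x e : V} (Q : H.Walk x e), e ∈ R.support →
    ∃ (y : V) (P : H.Walk x y), y ∈ R.support ∧
      (∀ z ∈ P.support, z ∈ R.support → z = y) ∧
      ∀ z ∈ P.support, z ∈ Q.support
  | x, _, Walk.nil, he => ⟨x, Walk.nil, he, by simp, by simp⟩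
  | x, e, Walk.cons h p, he => by
    by_cases hx : x ∈ R.support
    · exact ⟨x, Walk.nil, hx, by simp, by simp⟩
    · obtain ⟨y, P, hy, hmeet, hsub⟩ := aux_exists_first_meet R p he
      refine ⟨y, Walk.cons h P, hy, ?_, ?_⟩
      · intro z hz hzR
        rw [support_cons, List.mem_cons] at hz
        rcases hz with rfl | hz
        · exact absurd hzR hx
        · exact hmeet z hz hzR
      · intro z hz
        rw [support_cons, List.mem_cons] at hz
        rcases hz with rfl | hz
        · simp
        · exact List.mem_cons_of_mem _ (hsub z hz)

lemma aux_isPath_append {a b c : V} {p : H.Walk a b} {q : H.Walk b c}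
    (hp : p.IsPath) (hq : q.IsPath)
    (hmeet : ∀ z ∈ p.support, z ∈ q.support → z = b) : (p.append q).IsPath := by
  rw [isPath_def, support_append, List.nodup_append']
  have hqt : b ∉ q.support.tail ∧ q.support.tail.Nodup := by
    have := hq.support_nodup
    rw [q.support_eq_cons, List.nodup_cons] at this
    exact this
  refine ⟨hp.support_nodup, hqt.2, fun z hz hz' => ?_⟩
  have : z ∈ q.support := List.mem_of_mem_tail hz'
  exact hqt.1 ((hmeet z hz this) ▸ hz')

lemma aux_meet_takeUntil_dropUntil [DecidableEq V] {s t y : V} {R : H.Walk s t}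
    (hR : R.IsPath) (hy : y ∈ R.support) {z : V}
    (hz1 : z ∈ (R.takeUntil y hy).support) (hz2 : z ∈ (R.dropUntil y hy).support) :
    z = y := by
  have hnd : ((R.takeUntil y hy).support ++ (R.dropUntil y hy).support.tail).Nodup := by
    rw [← support_append, take_spec]
    exact hR.support_nodup
  rw [(R.dropUntil y hy).support_eq_cons, List.mem_cons] at hz2
  rcases hz2 with rfl | hz2
  · rfl
  · exact absurd hz1 (fun hz1 => (List.nodup_append'.mp hnd).2.2 hz1 hz2)

lemma aux_not_nil_of_ne {a b : V} {w : H.Walk a b} (hab : a ≠ b) : ¬ w.Nil := by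
  intro h
  apply hab
  have := w.end_mem_support
  rw [nil_iff_support_eq.mp h] at this
  simp at this; exact this.symm

lemma aux_mem_tail_support_iff {a b : V} {w : H.Walk a b} (hw : w.IsPath) (hn : ¬ w.Nil)
    {x : V} : x ∈ w.tail.support ↔ x ∈ w.support ∧ x ≠ a := by
  have hnd := hw.support_nodup
  rw [← cons_support_tail hn, List.nodup_cons] at hnd
  rw [← cons_support_tail hn]
  constructor
  · intro hx
    exact ⟨List.mem_cons_of_mem _ hx, fun h => hnd.1 (h ▸ hx)⟩
  · rintro ⟨hx, hne⟩
    rcases List.mem_cons.mp hx with rfl | hx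
    · exact absurd rfl hne
    · exact hx


lemma aux_forward {V : Type*} (G : SimpleGraph V) (v : V) (k : ℕ)
    (F : FanSubdivision G v k) :
    Nonempty (RootedPathMinor (G.induce {w : V | w ≠ v})
      {w : ↥{w : V | w ≠ v} | G.Adj v (w : V)} k) := by
  classical
  set S : Set V := {w : V | w ≠ v} with hS
  have hsnn : ∀ i, ¬ (F.spoke i).Nil := fun i => aux_not_nil_of_ne (Ne.symm (F.bne i))
  have hsucc_ne : ∀ (i : Fin k) (h : (i:ℕ)+1 < k), i ≠ ⟨(i:ℕ)+1, h⟩ := by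
    intro i h hh
    have := congrArg Fin.val hh
    simp at this
  have hbne : ∀ (i : Fin k) (h : (i:ℕ)+1 < k), F.b i ≠ F.b ⟨(i:ℕ)+1, h⟩ :=
    fun i h hh => hsucc_ne i h (F.binj hh)
  have hgnn : ∀ (i : Fin k) (h : (i:ℕ)+1 < k), ¬ (F.seg i h).reverse.Nil :=
    fun i h => aux_not_nil_of_ne (Ne.symm (hbne i h))
  set A : Fin k → Set V := fun i => {x | x ∈ (F.spoke i).support ∧ x ≠ v} with hA
  set D : Fin k → Set V := fun i =>
    {x | ∃ h : (i:ℕ)+1 < k, x ∈ (F.seg i h).support ∧ x ≠ F.b ⟨(i:ℕ)+1, h⟩} with hD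
  set T : Fin k → Set V := fun i => A i ∪ D i with hT
  have hAmem : ∀ (i : Fin k) (x : V), x ∈ (F.spoke i).tail.support ↔ x ∈ A i := by
    intro i x
    rw [aux_mem_tail_support_iff (F.spokePath i) (hsnn i)]
    rfl
  have hDmem : ∀ (i : Fin k) (h : (i:ℕ)+1 < k) (x : V),
      x ∈ (F.seg i h).reverse.tail.support ↔ x ∈ D i := by
    intro i h x
    rw [aux_mem_tail_support_iff ((isPath_reverse_iff _).mpr (F.segPath i h)) (hgnn i h)]
    constructor
    · rintro ⟨hx, hne⟩
      rw [support_reverse, List.mem_reverse] at hx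
      exact ⟨h, hx, hne⟩
    · rintro ⟨h', hx, hne⟩
      rw [support_reverse, List.mem_reverse]
      exact ⟨hx, hne⟩
  have hDempty : ∀ (i : Fin k), ¬ ((i:ℕ)+1 < k) → D i = ∅ := by
    intro i h
    ext x
    simp only [hD, Set.mem_setOf_eq, Set.mem_empty_iff_false, iff_false, not_exists]
    intro h'
    exact absurd h' h
  have hTS : ∀ i, T i ⊆ S := by
    rintro i x (⟨_, hx⟩ | ⟨h, hx, _⟩)
    · exact hx
    · exact fun hv => F.vNotinSeg i h (hv ▸ hx)
  -- connectivity of G.induce (T i)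
  have hconn : ∀ i, (G.induce (T i)).Connected := by
    intro i
    by_cases h : (i:ℕ)+1 < k
    · set W : G.Walk ((F.spoke i).getVert 1) ((F.seg i h).reverse.getVert 1) :=
        (F.spoke i).tail.append ((F.seg i h).reverse.tail.reverse) with hW
      have hset : T i = {x | x ∈ W.support} := by
        ext x
        simp only [hW, Set.mem_setOf_eq, mem_support_append_iff, support_reverse,
          List.mem_reverse, hT, Set.mem_union]
        rw [← hAmem i x, ← hDmem i h x]
      rw [hset]
      exact aux_connected_induce_support W
    · have hset : T i = {x | x ∈ (F.spoke i).tail.support} := by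
        ext x
        simp only [hT, Set.mem_union, hDempty i h, Set.mem_empty_iff_false, or_false,
          Set.mem_setOf_eq]
        rw [hAmem i x]
      rw [hset]
      exact aux_connected_induce_support _
  have hTdisj : ∀ i j, i ≠ j → ∀ x, x ∈ T i → x ∈ T j → False := by
    intro i j hij x hxi hxj
    rcases hxi with ⟨hxi, hxv⟩ | ⟨hi, hxi, hxbi⟩
    · rcases hxj with ⟨hxj, _⟩ | ⟨hj, hxj, hxbj⟩
      · exact hxv (Set.eq_of_mem_singleton (F.spokeDisj i j hij ▸ (⟨hxi, hxj⟩ :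
          x ∈ {x | x ∈ (F.spoke i).support} ∩ {x | x ∈ (F.spoke j).support})))
      · obtain ⟨h1, h2⟩ := F.spokeSegDisj i j hj ⟨hxi, hxj⟩
        rcases h2 with h2 | h2
        · exact hij (F.binj (h1.symm.trans h2 : F.b i = F.b j))
        · exact hxbj (h1.symm.trans h2 ▸ h1)
    · rcases hxj with ⟨hxj, _⟩ | ⟨hj, hxj, hxbj⟩
      · obtain ⟨h1, h2⟩ := F.spokeSegDisj j i hi ⟨hxj, hxi⟩
        rcases h2 with h2 | h2
        · exact hij (F.binj (h1.symm.trans h2 : F.b j = F.b i)).symm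
        · exact hxbi (h1.symm.trans h2 ▸ h1)
      · obtain ⟨h1, h2⟩ := F.segDisj i j hi hj hij ⟨hxi, hxj⟩
        rcases h1 with h1 | h1
        · rcases h2 with h2 | h2
          · exact hij (F.binj (h1.symm.trans h2))
          · exact hxbj h2
        · exact hxbi h1
  set branch : Fin k → Set ↥S := fun i => {w : ↥S | (w : V) ∈ T i} with hbranch
  refine ⟨⟨branch, ?_, ?_, ?_, ?_⟩⟩
  · intro i
    have hc := hconn i
    rw [connected_iff] at hc ⊢
    obtain ⟨hpre, ⟨z⟩⟩ := hc
    let χ : G.induce (T i) →g (G.induce S).induce (branch i) :=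
      ⟨fun z => ⟨⟨z.1, hTS i z.2⟩, z.2⟩, fun {a b} h => h⟩
    refine ⟨fun x y => ?_, ⟨⟨⟨z.1, hTS i z.2⟩, z.2⟩⟩⟩
    have hr := (hpre ⟨x.1.1, x.2⟩ ⟨y.1.1, y.2⟩).map χ
    have ex : χ ⟨x.1.1, x.2⟩ = x := Subtype.ext (Subtype.ext rfl)
    have ey : χ ⟨y.1.1, y.2⟩ = y := Subtype.ext (Subtype.ext rfl)
    rwa [ex, ey] at hr
  · intro i j hij
    rw [Set.disjoint_left]
    intro w hwi hwj
    exact hTdisj i j hij w hwi hwj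
  · intro i
    have hadj : G.Adj v ((F.spoke i).getVert 1) := adj_snd (hsnn i)
    have hne : ((F.spoke i).getVert 1) ≠ v := hadj.ne'
    have hmem : (F.spoke i).getVert 1 ∈ T i :=
      Or.inl ((hAmem i _).mp (start_mem_support _))
    exact ⟨⟨_, hne⟩, hmem, hadj⟩
  · intro i j hji
    have h : (i:ℕ)+1 < k := by have := j.isLt; omega
    have hjeq : (⟨(i:ℕ)+1, h⟩ : Fin k) = j := Fin.ext (by simp only [Fin.val_mk]; omega)
    set q := (F.seg i h).reverse with hq
    have hqn : ¬ q.Nil := hgnn i h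
    have hqadj : G.Adj (F.b ⟨(i:ℕ)+1,h⟩) (q.getVert 1) := adj_snd hqn
    have ha'T : q.getVert 1 ∈ T i :=
      Or.inr ((hDmem i h _).mp (start_mem_support _))
    have hbT : F.b ⟨(i:ℕ)+1,h⟩ ∈ T ⟨(i:ℕ)+1,h⟩ := Or.inl ⟨end_mem_support _, F.bne _⟩
    refine ⟨⟨q.getVert 1, hTS i ha'T⟩, ha'T, ⟨F.b ⟨(i:ℕ)+1,h⟩, hTS _ hbT⟩, ?_, ?_⟩
    · show F.b ⟨(i:ℕ)+1,h⟩ ∈ T j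
      rw [← hjeq]
      exact hbT
    · exact hqadj.symm

lemma aux_backward {V : Type*} (G : SimpleGraph V) (v : V) (k : ℕ)
    (M : RootedPathMinor (G.induce {w : V | w ≠ v})
      {w : ↥{w : V | w ≠ v} | G.Adj v (w : V)} k) :
    Nonempty (FanSubdivision G v k) := by
  classical
  set S : Set V := {w : V | w ≠ v} with hS
  set C : Fin k → Set V := fun i => Subtype.val '' (M.branch i) with hC
  have hCS : ∀ (i : Fin k) (x : V), x ∈ C i → x ≠ v := by
    rintro i x ⟨b, hb, rfl⟩
    exact b.2
  have hCdisj : ∀ i j, i ≠ j → ∀ x, x ∈ C i → x ∈ C j → False := by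
    rintro i j hij x ⟨a, ha, rfl⟩ ⟨b, hb, hba⟩
    have hba' : b = a := Subtype.ext hba
    exact Set.disjoint_left.mp (M.disjoint i j hij) ha (hba' ▸ hb)
  have hsuccne : ∀ (i : Fin k) (h : (i:ℕ)+1 < k), i ≠ ⟨(i:ℕ)+1, h⟩ := by
    intro i h hh
    have := congrArg Fin.val hh
    simp at this
  have hsuccinj : ∀ (i j : Fin k) (hi : (i:ℕ)+1 < k) (hj : (j:ℕ)+1 < k), i ≠ j →
      (⟨(i:ℕ)+1, hi⟩ : Fin k) ≠ ⟨(j:ℕ)+1, hj⟩ := by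
    intro i j hi hj hij hh
    have := congrArg Fin.val hh
    simp only [Fin.val_mk] at this
    exact hij (Fin.ext (by omega))
  have hCconn : ∀ i, (G.induce (C i)).Connected := by
    intro i
    have hc := M.connected i
    rw [connected_iff] at hc ⊢
    obtain ⟨hpre, ⟨z⟩⟩ := hc
    let φ : (G.induce S).induce (M.branch i) →g G.induce (C i) :=
      ⟨fun z => ⟨z.1.1, ⟨z.1, z.2, rfl⟩⟩, fun {a b} h => h⟩
    refine ⟨fun x y => ?_, ⟨φ z⟩⟩
    obtain ⟨a, ha, hax⟩ := id x.2
    obtain ⟨c, hc2, hcy⟩ := id y.2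
    have hr := (hpre ⟨a, ha⟩ ⟨c, hc2⟩).map φ
    have e1 : φ ⟨a, ha⟩ = x := Subtype.ext hax
    have e2 : φ ⟨c, hc2⟩ = y := Subtype.ext hcy
    rwa [e1, e2] at hr
  have hroot : ∀ i, ∃ x, x ∈ C i ∧ G.Adj v x := by
    intro i
    obtain ⟨w, hw1, hw2⟩ := M.rooted i
    exact ⟨w.1, ⟨w, hw1, rfl⟩, hw2⟩
  choose xx hxxC hxxadj using hroot
  have hcross : ∀ (i : Fin k) (h : (i:ℕ)+1 < k),
      ∃ a, a ∈ C i ∧ ∃ b, b ∈ C ⟨(i:ℕ)+1, h⟩ ∧ G.Adj a b := by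
    intro i h
    obtain ⟨a, ha, b, hb, hab⟩ := M.adj i ⟨(i:ℕ)+1, h⟩ rfl
    exact ⟨a.1, ⟨a, ha, rfl⟩, b.1, ⟨b, hb, rfl⟩, hab⟩
  choose f hf e he hfe using hcross
  have hen : ∀ i : Fin k, ∃ z, z ∈ C i ∧
      ∀ (j : Fin k) (h : (j:ℕ)+1 < k), i = ⟨(j:ℕ)+1, h⟩ → z = e j h := by
    intro i
    by_cases h0 : ∃ (j : Fin k) (h : (j:ℕ)+1 < k), i = ⟨(j:ℕ)+1, h⟩
    · obtain ⟨j, h, hi⟩ := h0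
      refine ⟨e j h, by rw [hi]; exact he j h, ?_⟩
      intro j' h' hi'
      have hjj : j = j' := by
        have hvv : ((⟨(j:ℕ)+1, h⟩ : Fin k) : ℕ) = ((⟨(j':ℕ)+1, h'⟩ : Fin k) : ℕ) := by
          rw [← hi, ← hi']
        simp only [Fin.val_mk] at hvv
        exact Fin.ext (by omega)
      subst hjj
      rfl
    · exact ⟨xx i, hxxC i, fun j h hi => absurd ⟨j, h, hi⟩ h0⟩
  choose en henC henE using hen
  have hex : ∀ i : Fin k, ∃ z, z ∈ C i ∧ ∀ (h : (i:ℕ)+1 < k), z = f i h := by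
    intro i
    by_cases h : (i:ℕ)+1 < k
    · exact ⟨f i h, hf i h, fun h' => rfl⟩
    · exact ⟨xx i, hxxC i, fun h' => absurd h' h⟩
  choose ex hexC hexF using hex
  have hRex : ∀ i : Fin k, ∃ R : G.Walk (en i) (ex i), R.IsPath ∧
      ∀ z ∈ R.support, z ∈ C i := by
    intro i
    obtain ⟨w0⟩ := (hCconn i).preconnected ⟨en i, henC i⟩ ⟨ex i, hexC i⟩
    refine ⟨(w0.map (SimpleGraph.Embedding.induce (C i)).toHom).bypass,
      bypass_isPath _, ?_⟩
    intro z hz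
    have hz' := support_bypass_subset _ hz
    erw [Walk.support_map] at hz'
    obtain ⟨a, ha, rfl⟩ := List.mem_map.mp hz'
    exact a.2
  choose R hRpath hRsub using hRex
  have hQex : ∀ i : Fin k, ∃ Q : G.Walk (xx i) (en i), ∀ z ∈ Q.support, z ∈ C i := by
    intro i
    obtain ⟨w0⟩ := (hCconn i).preconnected ⟨xx i, hxxC i⟩ ⟨en i, henC i⟩
    refine ⟨w0.map (SimpleGraph.Embedding.induce (C i)).toHom, ?_⟩
    intro z hz
    erw [Walk.support_map] at hz
    obtain ⟨a, ha, rfl⟩ := List.mem_map.mp hz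
    exact a.2
  choose Q hQsub using hQex
  have hyP : ∀ i : Fin k, ∃ (y : V) (P : G.Walk (xx i) y), P.IsPath ∧ y ∈ (R i).support ∧
      (∀ z ∈ P.support, z ∈ (R i).support → z = y) ∧ (∀ z ∈ P.support, z ∈ C i) := by
    intro i
    obtain ⟨y, P0, hy, hmeet, hsub⟩ :=
      aux_exists_first_meet (R i) (Q i) (start_mem_support (R i))
    refine ⟨y, P0.bypass, bypass_isPath _, hy, ?_, ?_⟩
    · exact fun z hz => hmeet z (support_bypass_subset _ hz)
    · exact fun z hz => hQsub i z (hsub z (support_bypass_subset _ hz))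
  choose y P hPpath hyR hPmeet hPsub using hyP
  have hyC : ∀ i, y i ∈ C i := fun i => hRsub i _ (hyR i)
  have hdropC : ∀ i z, z ∈ ((R i).dropUntil (y i) (hyR i)).support → z ∈ C i :=
    fun i z hz => hRsub i z (support_dropUntil_subset _ _ hz)
  have htakeC : ∀ i z, z ∈ ((R i).takeUntil (y i) (hyR i)).support → z ∈ C i :=
    fun i z hz => hRsub i z (support_takeUntil_subset _ _ hz)
  have hsegmem : ∀ (i : Fin k) (h : (i:ℕ)+1 < k) (z : V),
      z ∈ ((((R i).dropUntil (y i) (hyR i)).copy rfl (hexF i h)).append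
        (Walk.cons (hfe i h)
          (((R ⟨(i:ℕ)+1,h⟩).takeUntil (y ⟨(i:ℕ)+1,h⟩) (hyR ⟨(i:ℕ)+1,h⟩)).copy
            (henE ⟨(i:ℕ)+1,h⟩ i h rfl) rfl))).support ↔
      (z ∈ ((R i).dropUntil (y i) (hyR i)).support ∨
       z ∈ ((R ⟨(i:ℕ)+1,h⟩).takeUntil (y ⟨(i:ℕ)+1,h⟩) (hyR ⟨(i:ℕ)+1,h⟩)).support) := by
    intro i h z
    rw [mem_support_append_iff, support_copy, support_cons, List.mem_cons, support_copy]
    constructor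
    · rintro (hz | rfl | hz)
      · exact Or.inl hz
      · left
        have : ex i = f i h := hexF i h
        rw [← this]
        exact end_mem_support _
      · exact Or.inr hz
    · rintro (hz | hz)
      · exact Or.inl hz
      · exact Or.inr (Or.inr hz)
  refine ⟨⟨fun i => y i, ?_, ?_, fun i => Walk.cons (hxxadj i) (P i), ?_,
    fun i h => (((R i).dropUntil (y i) (hyR i)).copy rfl (hexF i h)).append
      (Walk.cons (hfe i h)
        (((R ⟨(i:ℕ)+1,h⟩).takeUntil (y ⟨(i:ℕ)+1,h⟩) (hyR ⟨(i:ℕ)+1,h⟩)).copy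
          (henE ⟨(i:ℕ)+1,h⟩ i h rfl) rfl)), ?_, ?_, ?_, ?_, ?_⟩⟩
  · -- binj
    intro i j hij
    by_contra hne
    have hij' : y i = y j := hij
    exact hCdisj i j hne (y j) (hij' ▸ hyC i) (hyC j)
  · -- bne
    exact fun i => hCS i _ (hyC i)
  · -- spokePath
    intro i
    rw [cons_isPath_iff]
    exact ⟨hPpath i, fun hv => hCS i v (hPsub i v hv) rfl⟩
  · -- segPath
    intro i h
    apply aux_isPath_append
    · rw [isPath_copy]
      exact (hRpath i).dropUntil _
    · rw [cons_isPath_iff]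
      constructor
      · rw [isPath_copy]
        exact (hRpath _).takeUntil _
      · intro hmem
        rw [support_copy] at hmem
        exact hCdisj i ⟨(i:ℕ)+1,h⟩ (hsuccne i h) (f i h) (hf i h) (htakeC _ _ hmem)
    · intro z hz hz'
      rw [support_copy] at hz
      rw [support_cons, List.mem_cons] at hz'
      rcases hz' with rfl | hz'
      · rfl
      · rw [support_copy] at hz'
        exact (hCdisj i ⟨(i:ℕ)+1,h⟩ (hsuccne i h) z (hdropC i z hz)
          (htakeC _ _ hz')).elim
  · -- vNotinSeg
    intro i h hv
    rcases (hsegmem i h v).mp hv with hv | hv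
    · exact hCS i v (hdropC i v hv) rfl
    · exact hCS _ v (htakeC _ v hv) rfl
  · -- spokeDisj
    intro i j hij
    ext z
    simp only [Set.mem_inter_iff, Set.mem_setOf_eq, support_cons, List.mem_cons,
      Set.mem_singleton_iff]
    constructor
    · rintro ⟨rfl | hzi, hzj⟩
      · rfl
      · rcases hzj with rfl | hzj
        · rfl
        · exact (hCdisj i j hij z (hPsub i z hzi) (hPsub j z hzj)).elim
    · rintro rfl
      exact ⟨Or.inl rfl, Or.inl rfl⟩
  · -- spokeSegDisj
    rintro i j h z ⟨hzs, hzg⟩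
    simp only [Set.mem_setOf_eq] at hzs hzg
    have hzg' := (hsegmem j h z).mp hzg
    have hzC : z ∈ C j ∨ z ∈ C ⟨(j:ℕ)+1, h⟩ := by
      rcases hzg' with hz | hz
      · exact Or.inl (hdropC j z hz)
      · exact Or.inr (htakeC _ z hz)
    have hzne : z ≠ v := by
      rcases hzC with hz | hz
      · exact hCS _ _ hz
      · exact hCS _ _ hz
    have hzi : z ∈ (P i).support := by
      rw [support_cons, List.mem_cons] at hzs
      rcases hzs with rfl | hzs
      · exact absurd rfl hzne
      · exact hzs
    simp only [Set.mem_inter_iff, Set.mem_singleton_iff, Set.mem_insert_iff]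
    rcases hzg' with hz | hz
    · have hij : i = j := by
        by_contra hne
        exact hCdisj i j hne z (hPsub i z hzi) (hdropC j z hz)
      subst hij
      have hzy := hPmeet i z hzi (support_dropUntil_subset _ _ hz)
      exact ⟨hzy, Or.inl hzy⟩
    · have hij : i = ⟨(j:ℕ)+1, h⟩ := by
        by_contra hne
        exact hCdisj i ⟨(j:ℕ)+1, h⟩ hne z (hPsub i z hzi) (htakeC _ z hz)
      subst hij
      have hzy := hPmeet _ z hzi (support_takeUntil_subset _ _ hz)
      exact ⟨hzy, Or.inr hzy⟩
  · -- segDisj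
    rintro i j hi hj hij z ⟨hz1, hz2⟩
    simp only [Set.mem_setOf_eq] at hz1 hz2
    simp only [Set.mem_inter_iff, Set.mem_singleton_iff, Set.mem_insert_iff]
    rcases (hsegmem i hi z).mp hz1 with h1 | h1 <;> rcases (hsegmem j hj z).mp hz2 with h2 | h2
    · exact (hCdisj i j hij z (hdropC i z h1) (hdropC j z h2)).elim
    · have hij' : i = ⟨(j:ℕ)+1, hj⟩ := by
        by_contra hne
        exact hCdisj i ⟨(j:ℕ)+1, hj⟩ hne z (hdropC i z h1) (htakeC _ z h2)
      subst hij'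
      have hzy := aux_meet_takeUntil_dropUntil (hRpath _) (hyR _) h2 h1
      exact ⟨Or.inl hzy, Or.inr hzy⟩
    · have hij' : j = ⟨(i:ℕ)+1, hi⟩ := by
        by_contra hne
        exact hCdisj j ⟨(i:ℕ)+1, hi⟩ hne z (hdropC j z h2) (htakeC _ z h1)
      subst hij'
      have hzy := aux_meet_takeUntil_dropUntil (hRpath _) (hyR _) h1 h2
      exact ⟨Or.inr hzy, Or.inl hzy⟩
    · exact (hCdisj ⟨(i:ℕ)+1, hi⟩ ⟨(j:ℕ)+1, hj⟩ (hsuccinj i j hi hj hij) z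
        (htakeC _ z h1) (htakeC _ z h2)).elim

end Aux

/-- `G` has a subdivided `k`-fan centered at `v` iff `G - v` has an
`N(v)`-rooted path minor on `k` vertices. -/
theorem fanSubdivision_iff_rootedPathMinor {V : Type*} (G : SimpleGraph V) (v : V) (k : ℕ) :
    Nonempty (FanSubdivision G v k) ↔
      Nonempty (RootedPathMinor (G.induce {w : V | w ≠ v})
        {w : ↥{w : V | w ≠ v} | G.Adj v (w : V)} k) := by
  constructor
  · rintro ⟨F⟩
    exact aux_forward G v k F
  · rintro ⟨M⟩
    exact aux_backward G v k M
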